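/- Let {|ξ_i⟩} and {|η_i⟩} be two orthonormal bases of a finite-dimensional H with P_{ξ_j} = P_{η_j} for some index j (P denoting the rank-one projection). If ∑_i |P_{ξ_i} − P_{η_i}| is proportional to the identity, then P_{ξ_i} = P_{η_i} for all i. -/

import Mathlib

open scoped ComplexOrder
open Matrix

/-- The rank-one projection `|ψ⟩⟨ψ|` as a matrix. -/
noncomputable def projMat {ι : Type*} [Fintype ι] (ψ : ι → ℂ) : Matrix ι ι ℂ :=
  Matrix.vecMulVec ψ (star ψ)

/-- The operator absolute value `|A| = √(AᴴA)`. -/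
noncomputable def matAbs {d : Type*} [Fintype d] [DecidableEq d]
    (A : Matrix d d ℂ) : Matrix d d ℂ :=
  (Matrix.posSemidef_conjTranspose_mul_self A).1.eigenvectorUnitary.1 *
    Matrix.diagonal ((↑) ∘ (√·) ∘ (Matrix.posSemidef_conjTranspose_mul_self A).1.eigenvalues) *
    (star (Matrix.posSemidef_conjTranspose_mul_self A).1.eigenvectorUnitary : Matrix d d ℂ)

lemma projMat_mulVec {ι : Type*} [Fintype ι] (ψ x : ι → ℂ) :
    projMat ψ *ᵥ x = (star ψ ⬝ᵥ x) • ψ := by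
  ext i
  simp only [projMat, Matrix.mulVec, dotProduct, Matrix.vecMulVec_apply,
    Pi.smul_apply, smul_eq_mul, Finset.sum_mul, Pi.star_apply]
  exact Finset.sum_congr rfl fun k _ => by ring

lemma matAbs_posSemidef {d : Type*} [Fintype d] [DecidableEq d] (A : Matrix d d ℂ) :
    (matAbs A).PosSemidef :=
  by
    unfold matAbs
    have hd : (Matrix.diagonal ((↑) ∘ (√·) ∘
        (Matrix.posSemidef_conjTranspose_mul_self A).1.eigenvalues) : Matrix d d ℂ).PosSemidef :=
      Matrix.posSemidef_diagonal_iff.mpr fun i => by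
        simpa using Complex.zero_le_real.mpr (Real.sqrt_nonneg _)
    exact hd.mul_mul_conjTranspose_same _

lemma matAbs_mul_self {d : Type*} [Fintype d] [DecidableEq d] (A : Matrix d d ℂ) :
    matAbs A * matAbs A = Aᴴ * A :=
  by
    unfold matAbs
    set h := Matrix.posSemidef_conjTranspose_mul_self A
    have hU : (star h.1.eigenvectorUnitary.1 : Matrix d d ℂ) * h.1.eigenvectorUnitary.1 = 1 :=
      h.1.eigenvectorUnitary.2.1
    have key := h.1.spectral_theorem
    rw [Unitary.conjStarAlgAut_apply] at key
    refine Eq.trans ?_ key.symm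
    simp only [mul_assoc]
    rw [← mul_assoc (star h.1.eigenvectorUnitary.1) h.1.eigenvectorUnitary.1, hU, one_mul,
      ← mul_assoc (Matrix.diagonal _), Matrix.diagonal_mul_diagonal]
    congr 3
    funext i
    simp only [Function.comp_apply]
    rw [← Complex.ofReal_mul, Real.mul_self_sqrt (h.eigenvalues_nonneg i)]
    rfl

lemma matAbs_mulVec_eq_zero {d : Type*} [Fintype d] [DecidableEq d]
    {A : Matrix d d ℂ} {v : d → ℂ} (h : A *ᵥ v = 0) : matAbs A *ᵥ v = 0 := by
  rw [← Matrix.conjTranspose_mul_self_mulVec_eq_zero (matAbs A) v,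
    (matAbs_posSemidef A).isHermitian.eq, matAbs_mul_self,
    Matrix.conjTranspose_mul_self_mulVec_eq_zero, h]


lemma sumMulVec {d κ : Type*} [Fintype d] (s : Finset κ) (M : κ → Matrix d d ℂ)
    (v : d → ℂ) : (∑ i ∈ s, M i) *ᵥ v = ∑ i ∈ s, M i *ᵥ v := by
  ext j
  simp only [Matrix.mulVec, dotProduct, Matrix.sum_apply, Finset.sum_apply, Finset.sum_mul]
  rw [Finset.sum_comm]

lemma dotSum {d κ : Type*} [Fintype d] (s : Finset κ) (x : d → ℂ) (w : κ → d → ℂ) :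
    x ⬝ᵥ (∑ i ∈ s, w i) = ∑ i ∈ s, x ⬝ᵥ w i := by
  simp only [dotProduct, Finset.sum_apply, Finset.mul_sum]
  rw [Finset.sum_comm]

theorem eq_of_common_projection_and_sum_abs_propId
    {ι : Type*} [Fintype ι] [DecidableEq ι]
    (ξ η : ι → ι → ℂ)
    (hξ : ∀ i j, (∑ k, (starRingEnd ℂ) (ξ i k) * ξ j k) = if i = j then 1 else 0)
    (hη : ∀ i j, (∑ k, (starRingEnd ℂ) (η i k) * η j k) = if i = j then 1 else 0)
    (j₀ : ι) (hj₀ : projMat (ξ j₀) = projMat (η j₀))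
    (hprop : ∃ c : ℂ,
      (∑ i, matAbs (projMat (ξ i) - projMat (η i))) = c • (1 : Matrix ι ι ℂ)) :
    ∀ i, projMat (ξ i) = projMat (η i) := by
  obtain ⟨c, hc⟩ := hprop
  set v := ξ j₀ with hv
  have hdξ : ∀ i j, star (ξ i) ⬝ᵥ ξ j = if i = j then 1 else 0 := by
    intro i j
    simp only [dotProduct, Pi.star_apply, ← starRingEnd_apply]
    exact hξ i j
  have hdη : ∀ i j, star (η i) ⬝ᵥ η j = if i = j then 1 else 0 := by
    intro i j
    simp only [dotProduct, Pi.star_apply, ← starRingEnd_apply]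
    exact hη i j
  -- v is fixed by projMat (η j₀), so v is a multiple of η j₀
  have hPv : projMat (ξ j₀) *ᵥ v = v := by
    rw [projMat_mulVec, hdξ j₀ j₀]; simp [hv]
  have hvη : v = (star (η j₀) ⬝ᵥ v) • η j₀ := by
    conv_lhs => rw [← hPv, hj₀, projMat_mulVec]
  -- for every i, (P i - Q i) *ᵥ v = 0
  have hAv : ∀ i, (projMat (ξ i) - projMat (η i)) *ᵥ v = 0 := by
    intro i
    rcases eq_or_ne i j₀ with rfl | hi
    · rw [hj₀, sub_self, Matrix.zero_mulVec]
    · rw [Matrix.sub_mulVec, projMat_mulVec, hdξ i j₀, if_neg hi, zero_smul]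
      conv_lhs => rw [hvη, Matrix.mulVec_smul, projMat_mulVec, hdη i j₀, if_neg hi]
      simp
  -- hence each matAbs kills v, so c • v = 0 and c = 0
  have hMv : (∑ i, matAbs (projMat (ξ i) - projMat (η i))) *ᵥ v = 0 := by
    rw [sumMulVec]
    exact Finset.sum_eq_zero fun i _ => matAbs_mulVec_eq_zero (hAv i)
  rw [hc] at hMv
  have hvv : star v ⬝ᵥ v = 1 := by simpa using hdξ j₀ j₀
  have hvne : v ≠ 0 := by
    intro h0
    rw [h0] at hvv; simp at hvv
  have hc0 : c = 0 := by
    have : c • v = 0 := by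
      simpa [Matrix.smul_mulVec, Matrix.one_mulVec] using hMv
    rcases smul_eq_zero.mp this with h | h
    · exact h
    · exact absurd h hvne
  rw [hc0, zero_smul] at hc
  -- the sum of the PSD matrices matAbs is zero, so each is zero
  have hMzero : ∀ i, matAbs (projMat (ξ i) - projMat (η i)) = 0 := by
    intro i
    set M := fun i => matAbs (projMat (ξ i) - projMat (η i)) with hM
    have hMx : ∀ x : ι → ℂ, M i *ᵥ x = 0 := by
      intro x
      have hsum : ∑ k, star x ⬝ᵥ M k *ᵥ x = 0 := by
        have h0 := congrArg (fun N => star x ⬝ᵥ N *ᵥ x) hc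
        simp only [hc0, zero_smul, Matrix.zero_mulVec, dotProduct_zero] at h0
        rw [← h0, sumMulVec, dotSum]
      have hterm : star x ⬝ᵥ M i *ᵥ x = 0 := by
        have hnn : ∀ k ∈ Finset.univ, (0:ℂ) ≤ star x ⬝ᵥ M k *ᵥ x := fun k _ =>
          (matAbs_posSemidef _).dotProduct_mulVec_nonneg x
        exact (Finset.sum_eq_zero_iff_of_nonneg hnn).mp hsum i (Finset.mem_univ i)
      exact ((matAbs_posSemidef _).dotProduct_mulVec_zero_iff x).mp hterm
    ext a b
    have := congrFun (hMx (Pi.single b 1)) a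
    simpa using this
  -- conclude
  intro i
  have h2 : (projMat (ξ i) - projMat (η i))ᴴ * (projMat (ξ i) - projMat (η i)) = 0 := by
    rw [← matAbs_mul_self, hMzero i, mul_zero]
  have := Matrix.conjTranspose_mul_self_eq_zero.mp h2
  exact sub_eq_zero.mp this
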